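/- Every ℤ^p-action A on ℤ² with nonzero fixed-point set is the linear part of a free affine ℤ^p-action on T². -/

import Mathlib

noncomputable def tt16 : ℝ := liouvilleNumber 3

lemma tt16_trans : Transcendental ℤ tt16 := transcendental_liouvilleNumber (by norm_num)

lemma key16 {m : ℕ} (c : Fin m → ℤ) (i₀ : Fin m) (h : c i₀ ≠ 0) (k : ℤ) :
    (∑ i, (c i : ℝ) * tt16 ^ ((i : ℕ) + 1)) ≠ (k : ℝ) := by
  intro heq
  apply tt16_trans
  refine ⟨(∑ i : Fin m, Polynomial.C (c i) * Polynomial.X ^ ((i : ℕ) + 1)) - Polynomial.C k,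
    ?_, ?_⟩
  · intro h0
    have hc : ((∑ i : Fin m, Polynomial.C (c i) * Polynomial.X ^ ((i : ℕ) + 1)) -
        Polynomial.C k).coeff ((i₀ : ℕ) + 1) = c i₀ := by
      rw [Polynomial.coeff_sub, Polynomial.finset_sum_coeff]
      rw [Finset.sum_eq_single i₀]
      · simp only [Polynomial.coeff_C_mul, Polynomial.coeff_X_pow, Polynomial.coeff_C,
          eq_self_iff_true, if_true, Nat.succ_ne_zero, if_false, mul_one, sub_zero]
      · intro j _ hj
        simp only [Polynomial.coeff_C_mul, Polynomial.coeff_X_pow]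
        rw [if_neg, mul_zero]
        intro hh
        exact (Ne.symm hj) (Fin.val_injective (by omega))
      · simp
    rw [h0] at hc
    simp at hc
    exact h hc.symm
  · have : (Polynomial.aeval tt16)
        ((∑ i : Fin m, Polynomial.C (c i) * Polynomial.X ^ ((i : ℕ) + 1)) - Polynomial.C k)
        = (∑ i, (c i : ℝ) * tt16 ^ ((i : ℕ) + 1)) - (k : ℝ) := by
      simp [map_sub, map_sum]
    rw [this, heq, sub_self]

lemma blevel (p : ℕ) (B : (Fin p → ℤ) → Matrix (Fin 2) (Fin 2) ℤ)
    (hhom : ∀ ℓ ℓ', B (ℓ + ℓ') = B ℓ * B ℓ')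
    (he00 : ∀ ℓ, B ℓ 0 0 = 1) (he10 : ∀ ℓ, B ℓ 1 0 = 0)
    (hdet : ∀ ℓ, B ℓ 1 1 = 1 ∨ B ℓ 1 1 = -1) :
    ∃ α : (Fin p → ℤ) → (Fin 2 → ℝ),
      (∀ ℓ ℓ', α (ℓ + ℓ') = α ℓ + ((B ℓ).map (Int.cast : ℤ → ℝ)).mulVec (α ℓ')) ∧
      (∀ ℓ, ℓ ≠ 0 → ∀ (x : Fin 2 → ℝ) (N : Fin 2 → ℤ),
        ((B ℓ).map (Int.cast : ℤ → ℝ)).mulVec x + α ℓ ≠ x + fun i => ((N i : ℤ) : ℝ)) := by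
  have hμadd : ∀ ℓ ℓ', B (ℓ + ℓ') 0 1 = B ℓ' 0 1 + B ℓ 0 1 * B ℓ' 1 1 := by
    intro ℓ ℓ'
    have := congrFun (congrFun (hhom ℓ ℓ') 0) 1
    simp only [Matrix.mul_apply, Fin.sum_univ_two, he00, he10] at this
    omega
  have hνmul : ∀ ℓ ℓ', B (ℓ + ℓ') 1 1 = B ℓ 1 1 * B ℓ' 1 1 := by
    intro ℓ ℓ'
    have := congrFun (congrFun (hhom ℓ ℓ') 1) 1
    simp only [Matrix.mul_apply, Fin.sum_univ_two, he00, he10] at this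
    omega
  have hne : ∀ (ℓ : Fin p → ℤ), ℓ ≠ 0 → ∃ i, ℓ i ≠ 0 := by
    intro ℓ hℓ
    by_contra hcon
    push_neg at hcon
    exact hℓ (funext fun i => hcon i)
  have hsum2 : ∀ ℓ : Fin p → ℤ, (∑ i, ((2 * ℓ i : ℤ) : ℝ) * tt16 ^ ((i : ℕ) + 1))
      = 2 * ∑ i, (ℓ i : ℝ) * tt16 ^ ((i : ℕ) + 1) := by
    intro ℓ
    rw [Finset.mul_sum]
    exact Finset.sum_congr rfl fun i _ => by push_cast; ring
  have hsumadd : ∀ ℓ ℓ' : Fin p → ℤ,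
      (∑ i, ((ℓ i + ℓ' i : ℤ) : ℝ) * tt16 ^ ((i : ℕ) + 1))
      = (∑ i, ((ℓ i : ℤ) : ℝ) * tt16 ^ ((i : ℕ) + 1))
        + ∑ i, ((ℓ' i : ℤ) : ℝ) * tt16 ^ ((i : ℕ) + 1) := by
    intro ℓ ℓ'
    rw [← Finset.sum_add_distrib]
    refine Finset.sum_congr rfl fun i _ => ?_
    push_cast
    ring
  by_cases hall : ∀ ℓ, B ℓ 1 1 = 1
  · -- ν ≡ 1 : μ is additive
    have hμadd' : ∀ ℓ ℓ', B (ℓ + ℓ') 0 1 = B ℓ 0 1 + B ℓ' 0 1 := by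
      intro ℓ ℓ'; rw [hμadd, hall]; ring
    refine ⟨fun ℓ => ![tt16 / 2 * (B ℓ 0 1 : ℝ) ^ 2 + ∑ i, (ℓ i : ℝ) * tt16 ^ ((i : ℕ) + 1),
      tt16 * (B ℓ 0 1 : ℝ)], ?_, ?_⟩
    · intro ℓ ℓ'
      funext i
      fin_cases i
      · simp only [Fin.zero_eta, Fin.isValue, Matrix.cons_val_zero, Pi.add_apply,
          Matrix.mulVec, dotProduct, Fin.sum_univ_two, Matrix.map_apply, he00, he10,
          hμadd' ℓ ℓ', hall, Matrix.cons_val_one, Matrix.head_cons]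
        rw [hsumadd ℓ ℓ']
        push_cast
        ring
      · simp only [Fin.mk_one, Fin.isValue, Matrix.cons_val_one, Matrix.head_cons,
          Pi.add_apply, Matrix.mulVec, dotProduct, Fin.sum_univ_two, Matrix.map_apply,
          he00, he10, hμadd' ℓ ℓ', hall, Matrix.cons_val_zero]
        push_cast
        ring
    · intro ℓ hℓ x N hx
      have h1 := congrFun hx 1
      have h0 := congrFun hx 0
      simp only [Matrix.cons_val_one, Matrix.head_cons, Pi.add_apply, Matrix.mulVec,
        dotProduct, Fin.sum_univ_two, Matrix.map_apply, he00, he10,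
        Matrix.cons_val_zero] at h1 h0
      rw [show B ℓ 1 1 = 1 from hall ℓ] at h1
      by_cases hμ0 : B ℓ 0 1 = 0
      · -- use first coordinate
        obtain ⟨i₀, hi₀⟩ := hne ℓ hℓ
        apply key16 ℓ i₀ hi₀ (N 0)
        rw [hμ0] at h0
        push_cast at h0
        linarith
      · -- use second coordinate
        apply key16 ![B ℓ 0 1] 0 (by simpa using hμ0) (N 1)
        simp only [Fin.sum_univ_one, Matrix.cons_val_zero, Fin.val_zero, zero_add, pow_one]
        push_cast at h1
        linarith
  · -- some ν ℓ₀ = -1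
    push_neg at hall
    obtain ⟨ℓ₀, hℓ₀⟩ := hall
    have hν₀ : B ℓ₀ 1 1 = -1 := (hdet ℓ₀).resolve_left hℓ₀
    have hμ0 : ∀ ℓ, B ℓ 1 1 = 1 → B ℓ 0 1 = 0 := by
      intro ℓ hν1
      have h1 := hμadd ℓ ℓ₀
      have h2 := hμadd ℓ₀ ℓ
      rw [add_comm ℓ₀ ℓ] at h2
      rw [hν₀] at h1
      rw [hν1] at h2
      omega
    refine ⟨fun ℓ => ![∑ i, (ℓ i : ℝ) * tt16 ^ ((i : ℕ) + 1), 0], ?_, ?_⟩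
    · intro ℓ ℓ'
      funext i
      fin_cases i
      · simp only [Fin.zero_eta, Fin.isValue, Matrix.cons_val_zero, Pi.add_apply,
          Matrix.mulVec, dotProduct, Fin.sum_univ_two, Matrix.map_apply, he00, he10,
          Matrix.cons_val_one, Matrix.head_cons]
        rw [hsumadd ℓ ℓ']
        push_cast
        ring
      · simp only [Fin.mk_one, Fin.isValue, Matrix.cons_val_one, Matrix.head_cons,
          Pi.add_apply, Matrix.mulVec, dotProduct, Fin.sum_univ_two, Matrix.map_apply,
          he00, he10, Matrix.cons_val_zero]
        push_cast
        ring
    · intro ℓ hℓ x N hx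
      have h1 := congrFun hx 1
      have h0 := congrFun hx 0
      simp only [Matrix.cons_val_one, Matrix.head_cons, Pi.add_apply, Matrix.mulVec,
        dotProduct, Fin.sum_univ_two, Matrix.map_apply, he00, he10,
        Matrix.cons_val_zero] at h1 h0
      obtain ⟨i₀, hi₀⟩ := hne ℓ hℓ
      rcases hdet ℓ with hν1 | hνm
      · -- ν ℓ = 1, μ ℓ = 0
        rw [show B ℓ 0 1 = 0 from hμ0 ℓ hν1] at h0
        apply key16 ℓ i₀ hi₀ (N 0)
        push_cast at h0
        linarith
      · -- ν ℓ = -1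
        apply key16 (fun i => 2 * ℓ i) i₀ (by simp [hi₀]) (2 * N 0 + B ℓ 0 1 * N 1)
        rw [hνm] at h1
        push_cast at h0 h1
        have h2 : -2 * x 1 = (N 1 : ℝ) := by linarith
        have h3 : (B ℓ 0 1 : ℝ) * (N 1 : ℝ) = (B ℓ 0 1 : ℝ) * (-2 * x 1) := by rw [h2]
        have h4 := hsum2 ℓ
        push_cast at h4 ⊢
        linarith [h0, h3, h4]

lemma mapcast_mul (L M : Matrix (Fin 2) (Fin 2) ℤ) :
    ((L * M).map (Int.cast : ℤ → ℝ)) = L.map (Int.cast : ℤ → ℝ) * M.map (Int.cast : ℤ → ℝ) := by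
  have := Matrix.map_mul (L := L) (M := M) (f := Int.castRingHom ℝ)
  simpa using this

/-- Every `ℤ^p`-action `A` on `ℤ²` with nonzero fixed-point set is the linear
part of a free affine `ℤ^p`-action on `T² = ℝ²/ℤ²`: there is a translation part
`α : ℤ^p → ℝ²` which is a 1-cocycle over `A` modulo `ℤ²` such that `x ↦ A(ℓ)x + α(ℓ)`
has no fixed point on the torus for `ℓ ≠ 0`. -/
theorem stmt16 (p : ℕ)
    (A : (Fin p → ℤ) → Matrix (Fin 2) (Fin 2) ℤ)
    (hhom : ∀ ℓ ℓ', A (ℓ + ℓ') = A ℓ * A ℓ')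
    (h0 : A 0 = 1)
    (hunit : ∀ ℓ, IsUnit (A ℓ).det)
    (hfix : ∃ v : Fin 2 → ℤ, v ≠ 0 ∧ ∀ ℓ, (A ℓ).mulVec v = v) :
    ∃ α : (Fin p → ℤ) → (Fin 2 → ℝ),
      (∀ ℓ ℓ', ∃ N : Fin 2 → ℤ,
        α (ℓ + ℓ') = α ℓ + ((A ℓ).map (Int.cast : ℤ → ℝ)).mulVec (α ℓ')
          + fun i => ((N i : ℤ) : ℝ)) ∧
      (∀ ℓ : Fin p → ℤ, ℓ ≠ 0 → ∀ x : Fin 2 → ℝ,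
        ¬ ∃ N : Fin 2 → ℤ,
          ((A ℓ).map (Int.cast : ℤ → ℝ)).mulVec x + α ℓ = x + fun i => ((N i : ℤ) : ℝ)) := by
  obtain ⟨v, hv0, hvfix⟩ := hfix
  -- make v primitive
  have hvi : v 0 ≠ 0 ∨ v 1 ≠ 0 := by
    by_contra hcon
    push_neg at hcon
    apply hv0
    funext i
    fin_cases i
    · exact hcon.1
    · exact hcon.2
  set g : ℤ := (Int.gcd (v 0) (v 1) : ℤ) with hgdef
  have hg0 : g ≠ 0 := by
    simp only [hgdef, ne_eq, Nat.cast_eq_zero, Int.gcd_eq_zero_iff]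
    tauto
  have hgpos : 0 < Int.gcd (v 0) (v 1) := by
    rcases Nat.eq_zero_or_pos (Int.gcd (v 0) (v 1)) with h | h
    · exfalso; apply hg0; simp [hgdef, h]
    · exact h
  set w : Fin 2 → ℤ := ![v 0 / g, v 1 / g] with hwdef
  have hvw : ∀ i, v i = g * w i := by
    intro i
    fin_cases i
    · rw [hwdef]
      simp only [Matrix.cons_val_zero]
      exact (Int.mul_ediv_cancel' (Int.gcd_dvd_left _ _)).symm
    · rw [hwdef]
      simp only [Matrix.cons_val_one, Matrix.head_cons]
      exact (Int.mul_ediv_cancel' (Int.gcd_dvd_right _ _)).symm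
  have hwfix : ∀ ℓ, (A ℓ).mulVec w = w := by
    intro ℓ
    funext i
    have := congrFun (hvfix ℓ) i
    simp only [Matrix.mulVec, dotProduct, Fin.sum_univ_two] at this ⊢
    rw [hvw 0, hvw 1, hvw i] at this
    apply mul_left_cancel₀ hg0
    ring_nf
    ring_nf at this
    linarith [this]
  have hcop : IsCoprime (w 0) (w 1) := by
    rw [Int.isCoprime_iff_gcd_eq_one, hwdef]
    simp only [Matrix.cons_val_zero, Matrix.cons_val_one, Matrix.head_cons]
    exact Int.gcd_div_gcd_div_gcd hgpos
  obtain ⟨a, b, hab⟩ := hcop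
  set P : Matrix (Fin 2) (Fin 2) ℤ := !![w 0, -b; w 1, a] with hPdef
  set Q : Matrix (Fin 2) (Fin 2) ℤ := !![a, b; -(w 1), w 0] with hQdef
  have hPQ : P * Q = 1 := by
    funext i j
    fin_cases i <;> fin_cases j <;>
      simp [hPdef, hQdef, Matrix.mul_apply, Fin.sum_univ_two] <;> linarith [hab]
  have hQP : Q * P = 1 := by
    funext i j
    fin_cases i <;> fin_cases j <;>
      simp [hPdef, hQdef, Matrix.mul_apply, Fin.sum_univ_two] <;> linarith [hab]
  have hPQ' : ∀ X : Matrix (Fin 2) (Fin 2) ℤ, P * (Q * X) = X := by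
    intro X; rw [← Matrix.mul_assoc, hPQ, Matrix.one_mul]
  set B : (Fin p → ℤ) → Matrix (Fin 2) (Fin 2) ℤ := fun ℓ => Q * A ℓ * P with hBdef
  have hBhom : ∀ ℓ ℓ', B (ℓ + ℓ') = B ℓ * B ℓ' := by
    intro ℓ ℓ'
    simp only [hBdef, hhom ℓ ℓ']
    simp only [Matrix.mul_assoc, hPQ']
  have he1 : ∀ ℓ, (B ℓ).mulVec ![1, 0] = ![1, 0] := by
    intro ℓ
    have hP1 : P.mulVec ![1, 0] = w := by
      funext i
      fin_cases i <;> simp [hPdef, hwdef, Matrix.mulVec, dotProduct, Fin.sum_univ_two]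
    have hQw : Q.mulVec w = ![1, 0] := by
      funext i
      fin_cases i <;>
        simp [hQdef, Matrix.mulVec, dotProduct, Fin.sum_univ_two] <;> linarith [hab]
    rw [hBdef]
    rw [← Matrix.mulVec_mulVec, ← Matrix.mulVec_mulVec, hP1, hwfix ℓ, hQw]
  have he00 : ∀ ℓ, B ℓ 0 0 = 1 := by
    intro ℓ
    have := congrFun (he1 ℓ) 0
    simp [Matrix.mulVec, dotProduct, Fin.sum_univ_two] at this
    omega
  have he10 : ∀ ℓ, B ℓ 1 0 = 0 := by
    intro ℓ
    have := congrFun (he1 ℓ) 1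
    simp [Matrix.mulVec, dotProduct, Fin.sum_univ_two] at this
    omega
  have hdet : ∀ ℓ, B ℓ 1 1 = 1 ∨ B ℓ 1 1 = -1 := by
    intro ℓ
    have hu : IsUnit (B ℓ).det := by
      rw [hBdef]
      simp only [Matrix.det_mul]
      have hPu : IsUnit P.det ∧ IsUnit Q.det := by
        constructor
        · exact IsUnit.of_mul_eq_one Q.det (by rw [← Matrix.det_mul, hPQ, Matrix.det_one])
        · exact IsUnit.of_mul_eq_one P.det (by rw [← Matrix.det_mul, hQP, Matrix.det_one])
      exact (hPu.2.mul (hunit ℓ)).mul hPu.1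
    rw [Matrix.det_fin_two, he00, he10] at hu
    simp only [one_mul, mul_zero, sub_zero] at hu
    exact Int.isUnit_iff.mp hu
  obtain ⟨α', hcoc, hfree⟩ := blevel p B hBhom he00 he10 hdet
  -- transport through P
  refine ⟨fun ℓ => (P.map (Int.cast : ℤ → ℝ)).mulVec (α' ℓ), ?_, ?_⟩
  · intro ℓ ℓ'
    refine ⟨0, ?_⟩
    have hz : (fun i : Fin 2 => (((0 : Fin 2 → ℤ) i : ℤ) : ℝ)) = (0 : Fin 2 → ℝ) := by
      funext i; simp
    show (P.map (Int.cast : ℤ → ℝ)).mulVec (α' (ℓ + ℓ'))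
        = (P.map (Int.cast : ℤ → ℝ)).mulVec (α' ℓ)
          + ((A ℓ).map (Int.cast : ℤ → ℝ)).mulVec ((P.map (Int.cast : ℤ → ℝ)).mulVec (α' ℓ'))
          + fun i => (((0 : Fin 2 → ℤ) i : ℤ) : ℝ)
    rw [hz, add_zero]
    rw [hcoc ℓ ℓ', Matrix.mulVec_add]
    congr 1
    rw [Matrix.mulVec_mulVec, Matrix.mulVec_mulVec]
    have hPB : P * B ℓ = A ℓ * P := by
      rw [hBdef]
      simp only [← Matrix.mul_assoc, hPQ, Matrix.one_mul]
    rw [← mapcast_mul, ← mapcast_mul, hPB]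
  · rintro ℓ hℓ x ⟨N, hN⟩
    apply hfree ℓ hℓ ((Q.map (Int.cast : ℤ → ℝ)).mulVec x) (Q.mulVec N)
    have hN' : ((A ℓ).map (Int.cast : ℤ → ℝ)).mulVec x
        + (P.map (Int.cast : ℤ → ℝ)).mulVec (α' ℓ) = x + fun i => ((N i : ℤ) : ℝ) := hN
    have hQP' : (Q.map (Int.cast : ℤ → ℝ)) * (P.map (Int.cast : ℤ → ℝ)) = 1 := by
      rw [← mapcast_mul, hQP]
      funext i j
      fin_cases i <;> fin_cases j <;> simp [Matrix.one_apply]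
    have hBQ : ((B ℓ).map (Int.cast : ℤ → ℝ)) * (Q.map (Int.cast : ℤ → ℝ))
        = (Q.map (Int.cast : ℤ → ℝ)) * ((A ℓ).map (Int.cast : ℤ → ℝ)) := by
      have : B ℓ * Q = Q * A ℓ := by
        rw [hBdef]
        simp only [Matrix.mul_assoc, hPQ]
        rw [Matrix.mul_one]
      rw [← mapcast_mul, ← mapcast_mul, this]
    calc ((B ℓ).map (Int.cast : ℤ → ℝ)).mulVec ((Q.map (Int.cast : ℤ → ℝ)).mulVec x) + α' ℓ
        = (Q.map (Int.cast : ℤ → ℝ)).mulVec (((A ℓ).map (Int.cast : ℤ → ℝ)).mulVec x) + α' ℓ := by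
          rw [Matrix.mulVec_mulVec, hBQ, ← Matrix.mulVec_mulVec]
      _ = (Q.map (Int.cast : ℤ → ℝ)).mulVec
            (((A ℓ).map (Int.cast : ℤ → ℝ)).mulVec x + (P.map (Int.cast : ℤ → ℝ)).mulVec (α' ℓ))
            := by
          rw [Matrix.mulVec_add]
          congr 1
          rw [Matrix.mulVec_mulVec, hQP', Matrix.one_mulVec]
      _ = (Q.map (Int.cast : ℤ → ℝ)).mulVec (x + fun i => ((N i : ℤ) : ℝ)) := by rw [hN']
      _ = (Q.map (Int.cast : ℤ → ℝ)).mulVec x + fun i => (((Q.mulVec N) i : ℤ) : ℝ) := by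
          rw [Matrix.mulVec_add]
          congr 1
          funext i
          fin_cases i <;>
            simp [Matrix.mulVec, dotProduct, Fin.sum_univ_two] <;> push_cast <;> ring
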